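/- Let μ ∈ ℝ and b > 0, and define ψ(θ) = μθ − log(1 − b²θ²) for |θ| < 1/b and ψ(θ) = +∞ otherwise (the cumulant generating function of the Laplace distribution with location μ and scale b). Then ψ*(μ) = 0, and for y ≠ μ, setting ρ = (y−μ)/b, one has ψ*(y) = √(1+ρ²) − 1 + log((2/ρ²)(√(1+ρ²) − 1)). -/

import Mathlib

/-- The cumulant generating function of the Laplace distribution with
location `μ` and scale `b`. -/
noncomputable def laplaceCGF (μ b : ℝ) : ℝ → EReal := fun θ =>
  if |θ| < 1 / b then ((μ * θ - Real.log (1 - b ^ 2 * θ ^ 2) : ℝ) : EReal) else ⊤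

lemma abs_lt_inv_iff (b t : ℝ) (hb : 0 < b) : |t| < 1 / b ↔ b ^ 2 * t ^ 2 < 1 := by
  rw [lt_div_iff₀ hb]
  constructor
  · intro h
    nlinarith [abs_nonneg t, sq_abs t, mul_nonneg (abs_nonneg t) hb.le]
  · intro h
    nlinarith [abs_nonneg t, sq_abs t, mul_nonneg (abs_nonneg t) hb.le]

lemma key_bound (b c t s : ℝ) (ht : b ^ 2 * t ^ 2 < 1) (hs : b ^ 2 * s ^ 2 < 1)
    (hstat : c * (1 - b ^ 2 * s ^ 2) = 2 * b ^ 2 * s) :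
    c * t + Real.log (1 - b ^ 2 * t ^ 2) ≤ c * s + Real.log (1 - b ^ 2 * s ^ 2) := by
  have hu : (0 : ℝ) < 1 - b ^ 2 * t ^ 2 := by linarith
  have hv : (0 : ℝ) < 1 - b ^ 2 * s ^ 2 := by linarith
  have hlog : Real.log (1 - b ^ 2 * t ^ 2) - Real.log (1 - b ^ 2 * s ^ 2)
      ≤ (1 - b ^ 2 * t ^ 2) / (1 - b ^ 2 * s ^ 2) - 1 := by
    rw [← Real.log_div hu.ne' hv.ne']
    exact Real.log_le_sub_one_of_pos (div_pos hu hv)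
  have hdiv : (1 - b ^ 2 * t ^ 2) / (1 - b ^ 2 * s ^ 2) - 1
      = (b ^ 2 * s ^ 2 - b ^ 2 * t ^ 2) / (1 - b ^ 2 * s ^ 2) := by
    field_simp
    ring
  rw [hdiv] at hlog
  have heq : c * (t - s) + (b ^ 2 * s ^ 2 - b ^ 2 * t ^ 2) / (1 - b ^ 2 * s ^ 2)
      = (- (b ^ 2 * (t - s) ^ 2)) / (1 - b ^ 2 * s ^ 2) := by
    rw [eq_div_iff hv.ne', add_mul, div_mul_cancel₀ _ hv.ne']
    linear_combination (t - s) * hstat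
  have hkey : c * (t - s) + (b ^ 2 * s ^ 2 - b ^ 2 * t ^ 2) / (1 - b ^ 2 * s ^ 2) ≤ 0 := by
    rw [heq]
    apply div_nonpos_of_nonpos_of_nonneg _ hv.le
    nlinarith [sq_nonneg (t - s), sq_nonneg b]
  linarith

lemma sup_eq (μ b y : ℝ) (hb : 0 < b) (s M : ℝ) (hs : b ^ 2 * s ^ 2 < 1)
    (hstat : (y - μ) * (1 - b ^ 2 * s ^ 2) = 2 * b ^ 2 * s)
    (hM : (y - μ) * s + Real.log (1 - b ^ 2 * s ^ 2) = M) :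
    (⨆ θ : ℝ, (((y * θ : ℝ) : EReal) - laplaceCGF μ b θ)) = (M : EReal) := by
  apply le_antisymm
  · apply iSup_le
    intro θ
    unfold laplaceCGF
    split_ifs with h
    · rw [← EReal.coe_sub, EReal.coe_le_coe_iff]
      have hθ : b ^ 2 * θ ^ 2 < 1 := (abs_lt_inv_iff b θ hb).mp h
      have := key_bound b (y - μ) θ s hθ hs hstat
      nlinarith [this]
    · simp [EReal.sub_top]
  · apply le_iSup_of_le s
    unfold laplaceCGF
    rw [if_pos ((abs_lt_inv_iff b s hb).mpr hs)]
    rw [← EReal.coe_sub, EReal.coe_le_coe_iff]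
    nlinarith [hM]

lemma laplace_stationary (b c : ℝ) (hb : 0 < b) (hc0 : c ≠ 0) :
    ∃ s : ℝ, b ^ 2 * s ^ 2 < 1 ∧ c * (1 - b ^ 2 * s ^ 2) = 2 * b ^ 2 * s ∧
      c * s + Real.log (1 - b ^ 2 * s ^ 2)
        = Real.sqrt (1 + (c / b) ^ 2) - 1 +
          Real.log ((2 / (c / b) ^ 2) * (Real.sqrt (1 + (c / b) ^ 2) - 1)) := by
  set S := Real.sqrt (1 + (c / b) ^ 2) with hSdef
  have hS2 : S ^ 2 = 1 + (c / b) ^ 2 := Real.sq_sqrt (by positivity)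
  have hS0 : 0 ≤ S := Real.sqrt_nonneg _
  have hρ : (0 : ℝ) < (c / b) ^ 2 := by
    have : c / b ≠ 0 := div_ne_zero hc0 hb.ne'
    positivity
  have hS1 : 1 < S := by nlinarith [hρ, hS2, hS0]
  have hS2' : b ^ 2 * S ^ 2 = b ^ 2 + c ^ 2 := by
    rw [hS2]; field_simp
  have h1 : 1 - b ^ 2 * ((S - 1) / c) ^ 2 = 2 * b ^ 2 * (S - 1) / c ^ 2 := by
    rw [div_pow, eq_div_iff (pow_ne_zero 2 hc0)]
    field_simp
    linear_combination -hS2'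
  have hpos : (0 : ℝ) < 2 * b ^ 2 * (S - 1) / c ^ 2 :=
    div_pos (by nlinarith [pow_pos hb 2]) (by positivity)
  have hcs : c * ((S - 1) / c) = S - 1 := by field_simp
  refine ⟨(S - 1) / c, by nlinarith [h1, hpos], ?_, ?_⟩
  · rw [h1]
    field_simp
  · rw [hcs, h1]
    congr 1
    rw [div_pow]
    field_simp

/-- The convex conjugate of the Laplace cumulant generating function vanishes at
`μ`, and for `y ≠ μ`, with `ρ = (y−μ)/b`, equals
`√(1+ρ²) − 1 + log((2/ρ²)(√(1+ρ²) − 1))`. -/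
theorem cramer_laplace (μ b : ℝ) (hb : 0 < b) :
    ((⨆ θ : ℝ, (((μ * θ : ℝ) : EReal) - laplaceCGF μ b θ)) = (0 : EReal)) ∧
    (∀ y : ℝ, y ≠ μ →
      (⨆ θ : ℝ, (((y * θ : ℝ) : EReal) - laplaceCGF μ b θ))
        = ((Real.sqrt (1 + ((y - μ) / b) ^ 2) - 1 +
            Real.log ((2 / ((y - μ) / b) ^ 2) *
              (Real.sqrt (1 + ((y - μ) / b) ^ 2) - 1)) : ℝ) : EReal)) := by
  constructor
  · have := sup_eq μ b μ hb 0 0 (by nlinarith) (by ring) (by simp)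
    exact_mod_cast this
  · intro y hy
    obtain ⟨s, hs1, hstat, hval⟩ :=
      laplace_stationary b (y - μ) hb (sub_ne_zero.mpr hy)
    exact sup_eq μ b y hb s _ hs1 hstat hval
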